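/- The 6-uniform morphism φ on Σ₈ locates words of length 6: for each word u of length 6 on Σ₈, there exists an integer m such that for all words v on Σ₈, every occurrence of u as a factor of φ(v) begins at a position congruent to m modulo 6. -/

import Mathlib

abbrev Sigma8 := ℤ × Fin 8

def phiAux (n : ℤ) : ℕ → List Sigma8
  | 0 => [(0,0),(1,1),(0,2),(0,3),(1,4),(n+3,5)]
  | 1 => [(1,6),(1,7),(0,0),(0,1),(0,2),(n+2,3)]
  | 2 => [(1,4),(1,5),(1,6),(0,7),(0,0),(n+3,1)]
  | 3 => [(0,2),(1,3),(1,4),(0,5),(1,6),(n+2,7)]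
  | 4 => [(0,0),(1,1),(0,2),(0,3),(1,4),(n+1,5)]
  | 5 => [(1,6),(1,7),(0,0),(0,1),(0,2),(n+2,3)]
  | 6 => [(1,4),(1,5),(1,6),(0,7),(0,0),(n+1,1)]
  | 7 => [(0,2),(1,3),(1,4),(0,5),(1,6),(n+2,7)]
  | _ => []

/-- The 6-uniform morphism φ on Σ₈, on a single letter. -/
def phi (a : Sigma8) : List Sigma8 := phiAux a.1 a.2.val

/-- φ extended to words by concatenation. -/
def phiW (w : List Sigma8) : List Sigma8 := w.flatMap phi

/-- A word on Σ₈ is subscript-increasing if subscripts increase by 1 mod 8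
from each letter to the next. -/
def SubIncr (w : List Sigma8) : Prop :=
  ∀ i : ℕ, (h : i + 1 < w.length) →
    (w.get ⟨i + 1, h⟩).2 = (w.get ⟨i, Nat.lt_of_succ_lt h⟩).2 + 1

/-- A 5/4-power: a word of the form x y x with x nonempty and |y| = 3|x|
(equivalently |xy| = 4|x|). -/
def IsPow54 {α : Type*} (w : List α) : Prop :=
  ∃ x y : List α, x ≠ [] ∧ y.length = 3 * x.length ∧ w = x ++ y ++ x

/- ## Skeleton abstraction -/

def bitsFix : Fin 4 → List (Option Bool)
  | 0 => [some false, some true, some false, some false, some true, none]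
  | 1 => [some true, some true, some false, some false, some false, none]
  | 2 => [some true, some true, some true, some false, some false, none]
  | 3 => [some false, some true, some true, some false, some true, none]

def subsL : Fin 4 → List (Fin 8)
  | 0 => [0,1,2,3,4,5]
  | 1 => [6,7,0,1,2,3]
  | 2 => [4,5,6,7,0,1]
  | 3 => [2,3,4,5,6,7]

def skelLetter (j : Fin 4) : List (Option Bool × Fin 8) := (bitsFix j).zip (subsL j)

def wSkel (r : Fin 6) (j k : Fin 4) : List (Option Bool × Fin 8) :=
  ((skelLetter j ++ skelLetter k).drop r.val).take 6

def compatB (x y : Option Bool × Fin 8) : Bool :=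
  x.2 == y.2 && (match x.1, y.1 with
    | some b, some b' => b == b'
    | _, _ => true)

def compatL : List (Option Bool × Fin 8) → List (Option Bool × Fin 8) → Bool
  | [], [] => true
  | x :: xs, y :: ys => compatB x y && compatL xs ys
  | _, _ => false

set_option maxRecDepth 10000 in
theorem core : ∀ (r r' : Fin 6) (j k j' k' : Fin 4),
    compatL (wSkel r j k) (wSkel r' j' k') = true → r = r' := by decide

/- ## Matching real letters to skeletons -/

def Matches (x : Sigma8) (e : Option Bool × Fin 8) : Prop :=
  x.2 = e.2 ∧ ∀ b : Bool, e.1 = some b → x.1 = (if b then 1 else 0)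

def red (j : Fin 8) : Fin 4 := ⟨j.val % 4, Nat.mod_lt _ (by norm_num)⟩

theorem matches_phi (a : Sigma8) : List.Forall₂ Matches (phi a) (skelLetter (red a.2)) := by
  obtain ⟨n, j⟩ := a
  fin_cases j <;>
    simp [phi, phiAux, skelLetter, bitsFix, subsL, red, Matches, List.forall₂_cons]

def wReal (r : Fin 6) (a b : Sigma8) : List Sigma8 := ((phi a ++ phi b).drop r.val).take 6

theorem matches_window (r : Fin 6) (a b : Sigma8) :
    List.Forall₂ Matches (wReal r a b) (wSkel r (red a.2) (red b.2)) :=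
  List.forall₂_take 6 (List.forall₂_drop r.val
    (List.rel_append (matches_phi a) (matches_phi b)))

theorem compat_of {w e e'} (h : List.Forall₂ Matches w e) (h' : List.Forall₂ Matches w e') :
    compatL e e' = true := by
  induction h generalizing e' with
  | nil => cases h'; rfl
  | @cons x y xs ys hm _ ih =>
    cases h' with
    | cons hm' ht' =>
      rename_i y' ys'
      rw [compatL, Bool.and_eq_true]
      refine ⟨?_, ih ht'⟩
      obtain ⟨hs, hb⟩ := hm
      obtain ⟨hs', hb'⟩ := hm'
      rw [compatB, Bool.and_eq_true]
      constructor
      · simp [← hs, ← hs']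
      · cases hy : y.1 with
        | none => simp [hy]
        | some b =>
          cases hy' : y'.1 with
          | none => simp [hy, hy']
          | some b' =>
            have := (hb b hy).symm.trans (hb' b' hy')
            cases b <;> cases b' <;> simp_all

theorem window_eq (r r' : Fin 6) (a b a' b' : Sigma8)
    (h : wReal r a b = wReal r' a' b') : r = r' := by
  exact core r r' _ _ _ _
    (compat_of (matches_window r a b) (h ▸ matches_window r' a' b'))

/- ## Extraction of occurrences -/

theorem phi_length (a : Sigma8) : (phi a).length = 6 := by
  obtain ⟨n, j⟩ := a; fin_cases j <;> rfl

theorem phiW_length (v : List Sigma8) : (phiW v).length = 6 * v.length := by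
  induction v with
  | nil => rfl
  | cons a t ih => simp [phiW, List.flatMap_cons, phi_length] at *; omega

theorem phiW_append (v w : List Sigma8) : phiW (v ++ w) = phiW v ++ phiW w := by
  simp [phiW]

theorem extract (u : List Sigma8) (hu : u.length = 6) (v : List Sigma8) (p : ℕ)
    (h : u <+: (phiW v).drop p) :
    ∃ (r : Fin 6) (a b : Sigma8), p % 6 = r.val ∧ u = wReal r a b := by
  set q := p / 6 with hq
  set r := p % 6 with hr
  have hr6 : r < 6 := Nat.mod_lt _ (by norm_num)
  have hlen : 6 ≤ ((phiW v).drop p).length := hu ▸ h.length_le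
  have hsplit : phiW v = phiW (v.take q) ++ phiW (v.drop q) := by
    rw [← phiW_append, List.take_append_drop]
  have hlt : (phiW (v.take q)).length ≤ p := by
    rw [phiW_length]
    have : (v.take q).length ≤ q := by simp
    omega
  have hdrop : (phiW v).drop p = (phiW (v.drop q)).drop r := by
    rw [hsplit, List.drop_append, List.drop_eq_nil_of_le hlt, List.nil_append]
    congr 1
    rw [phiW_length]
    have hql : q ≤ v.length := Nat.div_le_of_le_mul (by
      have := List.length_drop (l := phiW v) (i := p)
      rw [phiW_length] at this
      omega)
    have : (v.take q).length = q := by simp [List.length_take]; omega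
    rw [this]
    omega
  rw [hdrop] at h hlen
  -- v.drop q is nonempty
  obtain ⟨a, t, hat⟩ : ∃ a t, v.drop q = a :: t := by
    cases hvq : v.drop q with
    | nil => rw [hvq] at hlen; simp [phiW] at hlen
    | cons a t => exact ⟨a, t, rfl⟩
  rw [hat] at h hlen
  have hueq : u = ((phiW (a :: t)).drop r).take 6 := by
    rw [List.prefix_iff_eq_take.mp h, hu]
  cases t with
  | nil =>
    have hl : (phiW [a]).length = 6 := by rw [phiW_length]; rfl
    have hrl : ((phiW [a]).drop r).length = 6 - r := by rw [List.length_drop, hl]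
    have hr0 : r = 0 := by omega
    refine ⟨⟨0, by norm_num⟩, a, a, hr0, ?_⟩
    rw [hueq, hr0]
    simp only [List.drop_zero, wReal]
    have h1 : phiW [a] = phi a ++ [] := by simp [phiW]
    rw [h1, List.take_append, List.take_append, phi_length]
    rfl
  | cons b t' =>
    refine ⟨⟨r, hr6⟩, a, b, rfl, ?_⟩
    rw [hueq, wReal]
    have : phiW (a :: b :: t') = (phi a ++ phi b) ++ phiW t' := by
      simp [phiW, List.flatMap_cons]
    rw [this, List.drop_append]
    have h12 : (phi a ++ phi b).length = 12 := by
      simp [phi_length]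
    rw [h12]
    have : r - 12 = 0 := by omega
    rw [this]
    rw [List.take_append]
    have : ((phi a ++ phi b).drop r).length = 12 - r := by
      rw [List.length_drop, h12]
    rw [this]
    have h6 : 6 - (12 - r) = 0 := by omega
    rw [h6]
    simp

/-- φ locates words of length 6. -/
theorem stmt2 :
    ∀ u : List Sigma8, u.length = 6 →
      ∃ m : ℕ, ∀ v : List Sigma8, ∀ p : ℕ,
        u <+: (phiW v).drop p → p % 6 = m % 6 := by
  intro u hu
  by_cases h : ∃ v p, u <+: (phiW v).drop p
  · obtain ⟨v0, p0, h0⟩ := h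
    obtain ⟨r0, a0, b0, hr0, hw0⟩ := extract u hu v0 p0 h0
    refine ⟨p0, ?_⟩
    intro v p hp
    obtain ⟨r, a, b, hr, hw⟩ := extract u hu v p hp
    have : r = r0 := window_eq r r0 a b a0 b0 (hw ▸ hw0)
    have : r.val = r0.val := by rw [this]
    omega
  · exact ⟨0, fun v p hp => absurd ⟨v, p, hp⟩ h⟩
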